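/- A generic k-dimensional linear subspace of ℝ^m intersects exactly 2·∑_{d=0}^{k−1} binomial(m−1, d) open orthants of ℝ^m. -/
import Mathlib

open Module

namespace Stmt7

lemma sign_eq_iff'' {s x : ℝ} (hs : s = 1 ∨ s = -1) : Real.sign x = s ↔ 0 < s * x := by
  rcases hs with rfl | rfl
  · rw [one_mul]
    constructor
    · intro h
      rcases lt_trichotomy x 0 with hx | rfl | hx
      · rw [Real.sign_of_neg hx] at h; norm_num at h
      · rw [Real.sign_zero] at h; norm_num at h
      · exact hx
    · exact Real.sign_of_pos
  · constructor
    · intro h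
      rcases lt_trichotomy x 0 with hx | rfl | hx
      · nlinarith
      · rw [Real.sign_zero] at h; norm_num at h
      · rw [Real.sign_of_pos hx] at h; norm_num at h
    · intro h
      exact Real.sign_of_neg (by nlinarith)

variable {W : Type} [AddCommGroup W] [Module ℝ W]

/-- The set of sign patterns realized by a family of functionals. -/
def realizable {m : ℕ} (f : Fin m → (W →ₗ[ℝ] ℝ)) : Set (Fin m → ℝ) :=
  {σ | (∀ i, σ i = 1 ∨ σ i = -1) ∧ ∃ w, ∀ i, Real.sign (f i w) = σ i}

lemma mem_realizable {m : ℕ} (f : Fin m → (W →ₗ[ℝ] ℝ)) (σ : Fin m → ℝ) :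
    σ ∈ realizable f ↔ (∀ i, σ i = 1 ∨ σ i = -1) ∧ ∃ w, ∀ i, 0 < σ i * f i w := by
  constructor
  · rintro ⟨hpm, w, hw⟩
    exact ⟨hpm, w, fun i => (sign_eq_iff'' (hpm i)).mp (hw i)⟩
  · rintro ⟨hpm, w, hw⟩
    exact ⟨hpm, w, fun i => (sign_eq_iff'' (hpm i)).mpr (hw i)⟩

lemma realizable_finite {m : ℕ} (f : Fin m → (W →ₗ[ℝ] ℝ)) : (realizable f).Finite := by
  apply Set.Finite.subset (Set.Finite.pi (fun i : Fin m => (Set.finite_singleton (-1:ℝ)).insert 1))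
  rintro σ ⟨hpm, -⟩
  intro i _
  show σ i ∈ insert (1:ℝ) {-1}
  rcases hpm i with h | h <;> simp [h]

lemma perturb {m : ℕ} (f : Fin m → (W →ₗ[ℝ] ℝ)) (σ : Fin m → ℝ) (w u : W)
    (hw : ∀ i, 0 < σ i * f i w) :
    ∃ t : ℝ, 0 < t ∧ ∀ s : ℝ, |s| ≤ t → ∀ i, 0 < σ i * f i (w + s • u) := by
  by_cases hm : Nonempty (Fin m)
  · set δ := Finset.univ.inf' (Finset.univ_nonempty) (fun i => (σ i * f i w) / (|σ i * f i u| + 1))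
      with hδdef
    have hδ : 0 < δ := by
      rw [hδdef, Finset.lt_inf'_iff]
      intro i _
      exact div_pos (hw i) (by positivity)
    refine ⟨δ, hδ, fun s hs i => ?_⟩
    have hle : δ ≤ (σ i * f i w) / (|σ i * f i u| + 1) :=
      Finset.inf'_le _ (Finset.mem_univ i)
    have h1 : δ * (|σ i * f i u| + 1) ≤ σ i * f i w := by
      rw [← le_div_iff₀ (by positivity)]; exact hle
    have h2 : |s * (σ i * f i u)| < σ i * f i w := by
      rw [abs_mul]
      calc |s| * |σ i * f i u| ≤ δ * |σ i * f i u| :=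
            mul_le_mul_of_nonneg_right hs (abs_nonneg _)
        _ < δ * (|σ i * f i u| + 1) := by nlinarith
        _ ≤ σ i * f i w := h1
    have h3 : σ i * f i (w + s • u) = σ i * f i w + s * (σ i * f i u) := by
      rw [map_add, map_smul]; simp [smul_eq_mul]; ring
    rw [h3]
    have := abs_lt.mp h2
    linarith
  · exact ⟨1, one_pos, fun s _ i => absurd ⟨i⟩ hm⟩

lemma mid_zero {m : ℕ} (f : Fin m → (W →ₗ[ℝ] ℝ)) (σ : Fin m → ℝ) (w1 w2 : W)
    (F : W →ₗ[ℝ] ℝ) (hw1 : ∀ i, 0 < σ i * f i w1) (hw2 : ∀ i, 0 < σ i * f i w2)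
    (ha : 0 < F w1) (hb : F w2 < 0) :
    ∃ w : W, F w = 0 ∧ ∀ i, 0 < σ i * f i w := by
  have hab : 0 < F w1 - F w2 := by linarith
  set t : ℝ := F w1 / (F w1 - F w2) with htdef
  have ht0 : 0 < t := div_pos ha hab
  have ht1 : 0 < 1 - t := by
    have : t < 1 := (div_lt_one hab).mpr (by linarith)
    linarith
  refine ⟨(1 - t) • w1 + t • w2, ?_, fun i => ?_⟩
  · rw [map_add, map_smul, map_smul, smul_eq_mul, smul_eq_mul, htdef]
    field_simp
    ring
  · have h3 : σ i * f i ((1 - t) • w1 + t • w2)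
        = (1 - t) * (σ i * f i w1) + t * (σ i * f i w2) := by
      rw [map_add, map_smul, map_smul]; simp [smul_eq_mul]; ring
    rw [h3]
    exact add_pos (mul_pos ht1 (hw1 i)) (mul_pos ht0 (hw2 i))

lemma finrank_comap_subtype {E : Type*} [AddCommGroup E] [Module ℝ E]
    (V X : Submodule ℝ E) :
    finrank ℝ ↥(Submodule.comap V.subtype X) = finrank ℝ ↥(V ⊓ X) := by
  have h1 : Submodule.comap V.subtype X = Submodule.comap V.subtype (V ⊓ X) := by
    ext w
    simp [Submodule.mem_comap, w.2]
  rw [h1]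
  exact LinearEquiv.finrank_eq (Submodule.comapSubtypeEquivOfLe inf_le_left)

lemma step_split {W : Type} [AddCommGroup W] [Module ℝ W] {n : ℕ}
    (f : Fin (n + 2) → (W →ₗ[ℝ] ℝ)) (hne : f (Fin.last (n + 1)) ≠ 0) :
    (realizable f).ncard =
      (realizable (fun i : Fin (n + 1) => f i.castSucc)).ncard +
      (realizable (fun i : Fin (n + 1) =>
        (f i.castSucc).comp (LinearMap.ker (f (Fin.last (n + 1)))).subtype)).ncard := by
  classical
  set lst := Fin.last (n + 1) with hlst
  set fL : Fin (n + 1) → (W →ₗ[ℝ] ℝ) := fun i => f i.castSucc with hfL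
  set g : Fin (n + 1) → (↥(LinearMap.ker (f lst)) →ₗ[ℝ] ℝ) :=
    fun i => (f i.castSucc).comp (LinearMap.ker (f lst)).subtype with hg
  set A := realizable f with hA0
  set B := realizable fL with hB0
  set C := realizable g with hC0
  set Hr : (Fin (n + 1) → ℝ) → Prop :=
    fun σ => ∃ w : W, f lst w = 0 ∧ ∀ i, 0 < σ i * fL i w with hHr
  set B2 : Set (Fin (n + 1) → ℝ) := {σ ∈ B | Hr σ} with hB2
  set B1 : Set (Fin (n + 1) → ℝ) := {σ ∈ B | ¬ Hr σ} with hB1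
  -- a vector where the last functional is 1
  obtain ⟨u0, hu0⟩ : ∃ u0, f lst u0 ≠ 0 := by
    by_contra h
    push_neg at h
    exact hne (LinearMap.ext fun w => by simp [h])
  set u : W := (f lst u0)⁻¹ • u0 with hu
  have hu1 : f lst u = 1 := by
    rw [hu, map_smul, smul_eq_mul]
    field_simp
  -- the sign choice function on B1
  set ε : (Fin (n + 1) → ℝ) → ℝ := fun σ =>
    if h : ∃ w : W, (∀ i, 0 < σ i * fL i w) ∧ f lst w ≠ 0
    then Real.sign (f lst h.choose) else 0 with hε
  -- sign uniqueness on non-Hr patterns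
  have signuniq : ∀ σ, ¬ Hr σ → ∀ w1 w2 : W, (∀ i, 0 < σ i * fL i w1) →
      (∀ i, 0 < σ i * fL i w2) → Real.sign (f lst w1) = Real.sign (f lst w2) := by
    intro σ hnr w1 w2 h1 h2
    rcases lt_trichotomy (f lst w1) 0 with ha | ha | ha
    · rcases lt_trichotomy (f lst w2) 0 with hb | hb | hb
      · rw [Real.sign_of_neg ha, Real.sign_of_neg hb]
      · exact absurd ⟨w2, hb, h2⟩ hnr
      · obtain ⟨w, hw0, hwp⟩ := mid_zero fL σ w2 w1 (f lst) h2 h1 hb ha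
        exact absurd ⟨w, hw0, hwp⟩ hnr
    · exact absurd ⟨w1, ha, h1⟩ hnr
    · rcases lt_trichotomy (f lst w2) 0 with hb | hb | hb
      · obtain ⟨w, hw0, hwp⟩ := mid_zero fL σ w1 w2 (f lst) h1 h2 ha hb
        exact absurd ⟨w, hw0, hwp⟩ hnr
      · exact absurd ⟨w2, hb, h2⟩ hnr
      · rw [Real.sign_of_pos ha, Real.sign_of_pos hb]
  have epsdef : ∀ σ, ¬ Hr σ → ∀ w : W, (∀ i, 0 < σ i * fL i w) →
      ε σ = Real.sign (f lst w) ∧ (ε σ = 1 ∨ ε σ = -1) := by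
    intro σ hnr w hw
    have hwne : f lst w ≠ 0 := fun h0 => hnr ⟨w, h0, hw⟩
    have hex : ∃ w' : W, (∀ i, 0 < σ i * fL i w') ∧ f lst w' ≠ 0 := ⟨w, hw, hwne⟩
    have he : ε σ = Real.sign (f lst hex.choose) := by
      rw [hε]
      exact dif_pos hex
    obtain ⟨hc1, hc2⟩ := hex.choose_spec
    have h1 : ε σ = Real.sign (f lst w) := by
      rw [he]
      exact signuniq σ hnr _ w hc1 hw
    refine ⟨h1, ?_⟩
    rw [h1]
    rcases Real.sign_apply_eq_of_ne_zero _ hwne with h | h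
    · exact Or.inr h
    · exact Or.inl h
  -- the three pieces of A
  set S1 : Set (Fin (n + 2) → ℝ) := (fun σ => Fin.snoc σ (1 : ℝ)) '' B2 with hS1
  set S2 : Set (Fin (n + 2) → ℝ) := (fun σ => Fin.snoc σ (-1 : ℝ)) '' B2 with hS2
  set S3 : Set (Fin (n + 2) → ℝ) := (fun σ => Fin.snoc σ (ε σ)) '' B1 with hS3
  -- extension of Hr patterns in both directions
  have extend : ∀ σ ∈ B2, ∀ s : ℝ, s = 1 ∨ s = -1 → Fin.snoc σ s ∈ A := by
    rintro σ ⟨hσB, w, hw0, hww⟩ s hs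
    obtain ⟨hpm, -⟩ := (mem_realizable fL σ).mp hσB
    obtain ⟨t, ht, hts⟩ := perturb fL σ w u hww
    rw [hA0, mem_realizable]
    constructor
    · intro i
      refine Fin.lastCases ?_ (fun j => ?_) i
      · rwa [Fin.snoc_last]
      · rw [Fin.snoc_castSucc]; exact hpm j
    · rcases hs with rfl | rfl
      · refine ⟨w + t • u, fun i => ?_⟩
        refine Fin.lastCases ?_ (fun j => ?_) i
        · rw [Fin.snoc_last, map_add, map_smul, hw0, hu1, smul_eq_mul]
          simpa using ht
        · rw [Fin.snoc_castSucc]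
          exact hts t (by rw [abs_of_pos ht]) j
      · refine ⟨w + (-t) • u, fun i => ?_⟩
        refine Fin.lastCases ?_ (fun j => ?_) i
        · rw [Fin.snoc_last, map_add, map_smul, hw0, hu1, smul_eq_mul]
          simp only [zero_add, mul_one]
          nlinarith
        · rw [Fin.snoc_castSucc]
          exact hts (-t) (by rw [abs_neg, abs_of_pos ht]) j
  -- A is the union of the three pieces
  have hAeq : A = (S1 ∪ S2) ∪ S3 := by
    ext τ
    constructor
    · intro hτ
      obtain ⟨hpm, w, hw⟩ := (mem_realizable f τ).mp hτ
      set σ : Fin (n + 1) → ℝ := fun i => τ i.castSucc with hσ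
      have hσB : σ ∈ B := by
        rw [hB0, mem_realizable]
        exact ⟨fun i => hpm _, w, fun i => hw i.castSucc⟩
      have hsnoc : ∀ x : ℝ, τ lst = x → Fin.snoc σ x = τ := by
        intro x hx
        funext i
        refine Fin.lastCases ?_ (fun j => ?_) i
        · rw [Fin.snoc_last, ← hx, hlst]
        · rw [Fin.snoc_castSucc]
      by_cases hHrσ : Hr σ
      · left
        rcases hpm lst with h1 | h1
        · exact Or.inl ⟨σ, ⟨hσB, hHrσ⟩, hsnoc _ h1⟩
        · exact Or.inr ⟨σ, ⟨hσB, hHrσ⟩, hsnoc _ h1⟩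
      · right
        have hed := epsdef σ hHrσ w (fun i => hw i.castSucc)
        have hτl : τ lst = Real.sign (f lst w) :=
          ((sign_eq_iff'' (hpm lst)).mpr (hw lst)).symm
        exact ⟨σ, ⟨hσB, hHrσ⟩, hsnoc _ (by rw [hτl, hed.1])⟩
    · intro hτ
      rcases hτ with (⟨σ, hσ, rfl⟩ | ⟨σ, hσ, rfl⟩) | ⟨σ, hσ, rfl⟩
      · exact extend σ hσ 1 (Or.inl rfl)
      · exact extend σ hσ (-1) (Or.inr rfl)
      · obtain ⟨hσB, hnr⟩ := hσ
        obtain ⟨hpm, w, hw⟩ := (mem_realizable fL σ).mp hσB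
        have hwne : f lst w ≠ 0 := fun h0 => hnr ⟨w, h0, hw⟩
        obtain ⟨he1, he2⟩ := epsdef σ hnr w hw
        rw [hA0, mem_realizable]
        constructor
        · intro i
          refine Fin.lastCases ?_ (fun j => ?_) i
          · simp only [Fin.snoc_last]; exact he2
          · simp only [Fin.snoc_castSucc]; exact hpm j
        · refine ⟨w, fun i => ?_⟩
          refine Fin.lastCases ?_ (fun j => ?_) i
          · simp only [Fin.snoc_last]
            rw [he1]
            exact Real.sign_mul_pos_of_ne_zero _ hwne
          · simp only [Fin.snoc_castSucc]
            exact hw j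
  -- finiteness
  have hBfin : B.Finite := realizable_finite _
  have hB1fin : B1.Finite := hBfin.subset (Set.sep_subset _ _)
  have hB2fin : B2.Finite := hBfin.subset (Set.sep_subset _ _)
  have hS1fin : S1.Finite := hB2fin.image _
  have hS2fin : S2.Finite := hB2fin.image _
  have hS3fin : S3.Finite := hB1fin.image _
  -- injectivity facts
  have hinit : ∀ (σ : Fin (n + 1) → ℝ) (x : ℝ) (τ : Fin (n + 1) → ℝ) (y : ℝ),
      (Fin.snoc σ x : Fin (n + 2) → ℝ) = (Fin.snoc τ y : Fin (n + 2) → ℝ) → σ = τ ∧ x = y := by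
    intro σ x τ y h
    constructor
    · funext j
      have := congrFun h j.castSucc
      rwa [Fin.snoc_castSucc, Fin.snoc_castSucc] at this
    · have := congrFun h (Fin.last (n + 1))
      rwa [Fin.snoc_last, Fin.snoc_last] at this
  have hncard1 : S1.ncard = B2.ncard := by
    rw [hS1]
    exact Set.ncard_image_of_injOn (fun a _ b _ h => (hinit _ _ _ _ h).1)
  have hncard2 : S2.ncard = B2.ncard := by
    rw [hS2]
    exact Set.ncard_image_of_injOn (fun a _ b _ h => (hinit _ _ _ _ h).1)
  have hncard3 : S3.ncard = B1.ncard := by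
    rw [hS3]
    exact Set.ncard_image_of_injOn (fun a _ b _ h => (hinit _ _ _ _ h).1)
  -- disjointness
  have d12 : Disjoint S1 S2 := by
    rw [Set.disjoint_left]
    rintro τ ⟨σ, _, rfl⟩ ⟨σ', _, hh⟩
    have := (hinit _ _ _ _ hh.symm).2
    norm_num at this
  have d123 : Disjoint (S1 ∪ S2) S3 := by
    rw [Set.disjoint_left]
    rintro τ hτ ⟨σ', hσ', hh⟩
    rcases hτ with ⟨σ, hσ, rfl⟩ | ⟨σ, hσ, rfl⟩ <;>
      exact hσ'.2 ((hinit _ _ _ _ hh.symm).1 ▸ hσ.2)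
  -- C = B2
  have hCB2 : C = B2 := by
    ext σ
    rw [hC0, mem_realizable, hB2]
    constructor
    · rintro ⟨hpm, w', hw'⟩
      have hker := w'.2
      rw [LinearMap.mem_ker] at hker
      refine ⟨?_, w'.1, hker, fun i => hw' i⟩
      rw [hB0, mem_realizable]
      exact ⟨hpm, w'.1, fun i => hw' i⟩
    · rintro ⟨hσB, w, h0, hpos⟩
      obtain ⟨hpm, -⟩ := (mem_realizable fL σ).mp hσB
      exact ⟨hpm, ⟨w, LinearMap.mem_ker.mpr h0⟩, fun i => hpos i⟩
  -- B = B1 ∪ B2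
  have hBsplit : B.ncard = B1.ncard + B2.ncard := by
    have hBU : B = B1 ∪ B2 := by
      ext σ
      simp only [hB1, hB2, Set.mem_union, Set.mem_sep_iff]
      tauto
    have hd : Disjoint B1 B2 := by
      rw [Set.disjoint_left]
      rintro σ ⟨_, h1⟩ ⟨_, h2⟩
      exact h1 h2
    rw [hBU, Set.ncard_union_eq hd hB1fin hB2fin]
  -- final count
  rw [hAeq, Set.ncard_union_eq d123 (hS1fin.union hS2fin) hS3fin,
    Set.ncard_union_eq d12 hS1fin hS2fin, hncard1, hncard2, hncard3, hBsplit, hCB2]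
  ring

lemma pascal_sum (N k' : ℕ) :
    ∑ d ∈ Finset.range (k' + 1), (N + 1).choose d =
      ∑ d ∈ Finset.range (k' + 1), N.choose d + ∑ d ∈ Finset.range k', N.choose d := by
  rw [Finset.sum_range_succ' (fun d => (N + 1).choose d) k',
    Finset.sum_range_succ' (fun d => N.choose d) k']
  simp only [Nat.choose_succ_succ, Nat.choose_zero_right, Nat.succ_eq_add_one]
  rw [Finset.sum_add_distrib]
  omega

lemma key (n : ℕ) : ∀ (W : Type) [AddCommGroup W] [Module ℝ W] [FiniteDimensional ℝ W]
    (k : ℕ) (f : Fin (n + 1) → (W →ₗ[ℝ] ℝ)),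
    (∀ J : Finset (Fin (n + 1)), J.card ≤ k →
      finrank ℝ ↥(⨅ i ∈ J, LinearMap.ker (f i)) = k - J.card) →
    (realizable f).ncard = 2 * ∑ d ∈ Finset.range k, n.choose d := by
  induction n with
  | zero =>
    intro W _ _ _ k f hgen
    match k with
    | 0 =>
      have h0 := hgen ∅ (by simp)
      rw [show (⨅ i ∈ (∅ : Finset _), LinearMap.ker (f i)) = ⊤ by simp, finrank_top] at h0
      simp only [Finset.card_empty, Nat.sub_zero] at h0
      have hsub : Subsingleton W := by
        rw [← Module.finrank_zero_iff (R := ℝ)]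
        omega
      have hempty : realizable f = ∅ := by
        ext σ
        simp only [Set.mem_empty_iff_false, iff_false]
        rintro ⟨hpm, w, hw⟩
        have h1 := hw 0
        have hw0 : w = 0 := Subsingleton.elim _ _
        rw [hw0, map_zero, Real.sign_zero] at h1
        rcases hpm 0 with h | h <;> rw [← h1] at h <;> norm_num at h
      rw [hempty]
      simp
    | k' + 1 =>
      have h1 := hgen {0} (by simp)
      rw [show (⨅ i ∈ ({0} : Finset _), LinearMap.ker (f i)) = LinearMap.ker (f 0) by simp,
        Finset.card_singleton] at h1
      have hne : f 0 ≠ 0 := by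
        intro h
        rw [h, LinearMap.ker_zero, finrank_top] at h1
        have h0 := hgen ∅ (by simp)
        rw [show (⨅ i ∈ (∅ : Finset _), LinearMap.ker (f i)) = ⊤ by simp, finrank_top] at h0
        simp only [Finset.card_empty, Nat.sub_zero] at h0
        omega
      obtain ⟨u0, hu0⟩ : ∃ u0, f 0 u0 ≠ 0 := by
        by_contra h
        push_neg at h
        exact hne (LinearMap.ext fun w => by simp [h])
      have hpair : realizable f = {(fun _ => 1 : Fin 1 → ℝ), (fun _ => -1 : Fin 1 → ℝ)} := by
        ext σ
        constructor
        · rintro ⟨hpm, w, hw⟩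
          rcases hpm 0 with h | h
          · left; funext i; rw [(show i = 0 by omega)]; exact h
          · right; funext i; rw [(show i = 0 by omega)]; exact h
        · intro hσ
          rcases hσ with rfl | rfl
          · refine ⟨fun _ => Or.inl rfl, (f 0 u0)⁻¹ • u0, fun i => ?_⟩
            rw [(show i = 0 by omega), map_smul, smul_eq_mul]
            rw [inv_mul_cancel₀ hu0]
            exact Real.sign_one
          · refine ⟨fun _ => Or.inr rfl, -((f 0 u0)⁻¹ • u0), fun i => ?_⟩
            rw [(show i = 0 by omega), map_neg, map_smul, smul_eq_mul]
            rw [inv_mul_cancel₀ hu0]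
            rw [show (-1 : ℝ) = -(1 : ℝ) by norm_num, Real.sign_neg, Real.sign_one]
      rw [hpair]
      rw [Set.ncard_pair (by
        intro h
        have := congrFun h 0
        norm_num at this)]
      have hsum : ∑ d ∈ Finset.range (k' + 1), Nat.choose 0 d = 1 := by
        rw [Finset.sum_eq_single_of_mem 0 (Finset.mem_range.mpr (Nat.succ_pos k'))]
        · exact Nat.choose_self 0
        · intro b _ hb
          exact Nat.choose_eq_zero_of_lt (Nat.pos_of_ne_zero hb)
      rw [hsum]
  | succ n ih =>
    intro W _ _ _ k f hgen
    match k with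
    | 0 =>
      have h0 := hgen ∅ (by simp)
      rw [show (⨅ i ∈ (∅ : Finset _), LinearMap.ker (f i)) = ⊤ by simp, finrank_top] at h0
      simp only [Finset.card_empty, Nat.sub_zero] at h0
      have hsub : Subsingleton W := by
        rw [← Module.finrank_zero_iff (R := ℝ)]
        omega
      have hempty : realizable f = ∅ := by
        ext σ
        simp only [Set.mem_empty_iff_false, iff_false]
        rintro ⟨hpm, w, hw⟩
        have h1 := hw 0
        have hw0 : w = 0 := Subsingleton.elim _ _
        rw [hw0, map_zero, Real.sign_zero] at h1
        rcases hpm 0 with h | h <;> rw [← h1] at h <;> norm_num at h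
      rw [hempty]
      simp
    | k' + 1 =>
      set lst := Fin.last (n + 1) with hlst
      set emb : Fin (n + 1) ↪ Fin (n + 2) :=
        ⟨Fin.castSucc, Fin.castSucc_injective _⟩ with hemb
      have h1 := hgen {lst} (by simp)
      rw [show (⨅ i ∈ ({lst} : Finset _), LinearMap.ker (f i)) = LinearMap.ker (f lst) by simp,
        Finset.card_singleton] at h1
      have h0 := hgen ∅ (by simp)
      rw [show (⨅ i ∈ (∅ : Finset _), LinearMap.ker (f i)) = ⊤ by simp, finrank_top] at h0
      simp only [Finset.card_empty, Nat.sub_zero] at h0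
      have hne : f lst ≠ 0 := by
        intro h
        rw [h, LinearMap.ker_zero, finrank_top] at h1
        omega
      rw [step_split f hne]
      -- map lemma for iInf over mapped finsets
      have hmapinf : ∀ J : Finset (Fin (n + 1)),
          (⨅ i ∈ J, LinearMap.ker (f i.castSucc)) =
            ⨅ i ∈ J.map emb, LinearMap.ker (f i) := by
        intro J
        ext w
        simp only [Submodule.mem_iInf, Finset.mem_map, LinearMap.mem_ker]
        constructor
        · rintro h i ⟨j, hj, rfl⟩
          exact h j hj
        · intro h j hj
          exact h (emb j) ⟨j, hj, rfl⟩
      -- deleted arrangement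
      have hB : (realizable (fun i : Fin (n + 1) => f i.castSucc)).ncard =
          2 * ∑ d ∈ Finset.range (k' + 1), n.choose d := by
        apply ih W (k' + 1) (fun i => f i.castSucc)
        intro J hJ
        rw [hmapinf J, hgen (J.map emb) (by rwa [Finset.card_map]), Finset.card_map]
      -- restricted arrangement
      have hC : (realizable (fun i : Fin (n + 1) =>
          (f i.castSucc).comp (LinearMap.ker (f lst)).subtype)).ncard =
          2 * ∑ d ∈ Finset.range k', n.choose d := by
        apply ih ↥(LinearMap.ker (f lst)) k'
        intro J hJ
        have heq1 : (⨅ i ∈ J, LinearMap.ker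
            ((f i.castSucc).comp (LinearMap.ker (f lst)).subtype)) =
            Submodule.comap (LinearMap.ker (f lst)).subtype
              (⨅ i ∈ J, LinearMap.ker (f i.castSucc)) := by
          ext w
          simp only [Submodule.mem_iInf, Submodule.mem_comap, LinearMap.mem_ker,
            LinearMap.comp_apply]
        rw [heq1, finrank_comap_subtype]
        have heq2 : (LinearMap.ker (f lst) ⊓ ⨅ i ∈ J, LinearMap.ker (f i.castSucc)) =
            ⨅ i ∈ insert lst (J.map emb), LinearMap.ker (f i) := by
          ext w
          simp only [Submodule.mem_inf, Submodule.mem_iInf, Finset.mem_insert,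
            Finset.mem_map, LinearMap.mem_ker]
          constructor
          · rintro ⟨hw0, hwJ⟩ i hi
            rcases hi with rfl | ⟨j, hj, rfl⟩
            · exact hw0
            · exact hwJ j hj
          · intro h
            exact ⟨h lst (Or.inl rfl), fun j hj => h (emb j) (Or.inr ⟨j, hj, rfl⟩)⟩
        rw [heq2]
        have hnotmem : lst ∉ J.map emb := by
          simp only [Finset.mem_map, not_exists]
          rintro j ⟨hj, hj2⟩
          exact absurd hj2 (Fin.castSucc_lt_last j).ne
        have hcard : (insert lst (J.map emb)).card = J.card + 1 := by
          rw [Finset.card_insert_of_notMem hnotmem, Finset.card_map]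
        rw [hgen _ (by omega), hcard]
        omega
      rw [hB, hC, pascal_sum]
      ring

end Stmt7

theorem stmt_7 {m k : ℕ} (hk : 1 ≤ k) (hkm : k ≤ m)
    (V : Submodule ℝ (Fin m → ℝ))
    (hdim : Module.finrank ℝ V = k)
    (hgen : ∀ J : Finset (Fin m), J.card ≤ k →
      Module.finrank ℝ ↥(V ⊓ ⨅ i ∈ J, LinearMap.ker (LinearMap.proj (R := ℝ)
        (φ := fun _ : Fin m => ℝ) i)) = k - J.card) :
    Set.ncard {S : Fin m → ℝ | (∀ i, S i = 1 ∨ S i = -1) ∧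
      ∃ v ∈ V, ∀ i, Real.sign (v i) = S i} =
      2 * ∑ d ∈ Finset.range k, (m - 1).choose d := by
  obtain ⟨n, rfl⟩ : ∃ n, m = n + 1 := ⟨m - 1, by omega⟩
  set f : Fin (n + 1) → (↥V →ₗ[ℝ] ℝ) := fun i =>
    (LinearMap.proj (R := ℝ) (φ := fun _ : Fin (n + 1) => ℝ) i).comp V.subtype with hf
  have hset : {S : Fin (n + 1) → ℝ | (∀ i, S i = 1 ∨ S i = -1) ∧
      ∃ v ∈ V, ∀ i, Real.sign (v i) = S i} = Stmt7.realizable f := by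
    ext S
    constructor
    · rintro ⟨hpm, v, hv, hs⟩
      exact ⟨hpm, ⟨v, hv⟩, fun i => hs i⟩
    · rintro ⟨hpm, w, hw⟩
      exact ⟨hpm, w.1, w.2, fun i => hw i⟩
  rw [hset]
  rw [Stmt7.key n ↥V k f ?_]
  · norm_num
  · intro J hJ
    have heq : (⨅ i ∈ J, LinearMap.ker (f i)) = Submodule.comap V.subtype
        (⨅ i ∈ J, LinearMap.ker (LinearMap.proj (R := ℝ)
          (φ := fun _ : Fin (n + 1) => ℝ) i)) := by
      ext w
      simp only [Submodule.mem_iInf, Submodule.mem_comap, LinearMap.mem_ker, hf,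
        LinearMap.comp_apply]
    rw [heq, Stmt7.finrank_comap_subtype]
    exact hgen J hJ
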